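/- Let g : [0,r₀] → ℝ be positive, differentiable, with g'(r) ≥ −C g^{3/2}(r) on [0,r₀] and g(r₀) = g(0)/2. Then g(r₀) ≥ c r₀^{-2}, where c = (2(√2 − 1)/C)² / 4, i.e., there exists an explicit constant c > 0 depending only on C such that g(r₀) ≥ c r₀^{-2}. -/

import Mathlib

theorem stmt15 (r₀ C : ℝ) (hr₀ : 0 < r₀) (hC : 0 < C) (g g' : ℝ → ℝ)
    (hpos : ∀ r ∈ Set.Icc (0:ℝ) r₀, 0 < g r)
    (hderiv : ∀ r ∈ Set.Icc (0:ℝ) r₀, HasDerivAt g (g' r) r)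
    (hineq : ∀ r ∈ Set.Icc (0:ℝ) r₀, -(C * (g r) ^ ((3:ℝ) / 2)) ≤ g' r)
    (hhalf : g r₀ = g 0 / 2) :
    ((2 - Real.sqrt 2) / C) ^ 2 / r₀ ^ 2 ≤ g r₀ := by
  set φ : ℝ → ℝ := fun r => C / 2 * r - g r ^ (-(1:ℝ)/2) with hφ
  have hmem0 : (0:ℝ) ∈ Set.Icc (0:ℝ) r₀ := ⟨le_refl _, hr₀.le⟩
  have hmemr : r₀ ∈ Set.Icc (0:ℝ) r₀ := ⟨hr₀.le, le_refl _⟩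
  have hDφ : ∀ r ∈ Set.Icc (0:ℝ) r₀,
      HasDerivAt φ (C / 2 - g' r * (-(1:ℝ)/2) * g r ^ ((-(1:ℝ)/2) - 1)) r := by
    intro r hr
    have h := ((hasDerivAt_id r).const_mul (C/2)).sub
      ((hderiv r hr).rpow_const (p := -(1:ℝ)/2) (Or.inl (hpos r hr).ne'))
    simp only [mul_one] at h
    exact h
  have hDφ_nonneg : ∀ r ∈ Set.Icc (0:ℝ) r₀,
      0 ≤ C / 2 - g' r * (-(1:ℝ)/2) * g r ^ ((-(1:ℝ)/2) - 1) := by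
    intro r hr
    have hg := hpos r hr
    have hkey : g r ^ ((3:ℝ)/2) * g r ^ ((-(1:ℝ)/2) - 1) = 1 := by
      rw [← Real.rpow_add hg]
      norm_num
    have hpw : (0:ℝ) ≤ g r ^ ((-(1:ℝ)/2) - 1) := (Real.rpow_pos_of_pos hg _).le
    have h1 := mul_le_mul_of_nonneg_right (hineq r hr) hpw
    -- h1 : -(C * g r ^ (3/2)) * g r ^ (...) ≤ g' r * g r ^ (...)
    nlinarith [h1, hkey]
  have hmono : MonotoneOn φ (Set.Icc 0 r₀) := by
    apply monotoneOn_of_deriv_nonneg (convex_Icc 0 r₀)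
    · intro r hr
      exact ((hDφ r hr).differentiableAt.continuousAt).continuousWithinAt
    · intro r hr
      rw [interior_Icc] at hr
      exact ((hDφ r (Set.Ioo_subset_Icc_self hr)).differentiableAt).differentiableWithinAt
    · intro r hr
      rw [interior_Icc] at hr
      rw [(hDφ r (Set.Ioo_subset_Icc_self hr)).deriv]
      exact hDφ_nonneg r (Set.Ioo_subset_Icc_self hr)
  have hm := hmono hmem0 hmemr hr₀.le
  simp only [hφ, mul_zero, zero_sub] at hm
  -- hm : -(g 0 ^ (-(1)/2)) ≤ C/2 * r₀ - g r₀ ^ (-(1)/2)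
  have hgr := hpos r₀ hmemr
  have hg0 : g 0 = 2 * g r₀ := by linarith [hhalf]
  have h2 : Real.sqrt 2 = (2:ℝ) ^ ((1:ℝ)/2) := Real.sqrt_eq_rpow 2
  have hsplit : g 0 ^ (-(1:ℝ)/2) = (2:ℝ) ^ (-(1:ℝ)/2) * g r₀ ^ (-(1:ℝ)/2) := by
    rw [hg0, Real.mul_rpow (by norm_num) hgr.le]
  set x := g r₀ ^ (-(1:ℝ)/2) with hx
  have hxpos : 0 < x := Real.rpow_pos_of_pos hgr _
  have hs2 : (0:ℝ) < Real.sqrt 2 := Real.sqrt_pos.mpr (by norm_num)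
  have hs2sq : Real.sqrt 2 * Real.sqrt 2 = 2 := Real.mul_self_sqrt (by norm_num)
  have hs2lt : Real.sqrt 2 < 2 := by nlinarith
  have hinv : (2:ℝ) ^ (-(1:ℝ)/2) = (Real.sqrt 2)⁻¹ := by
    rw [h2, ← Real.rpow_neg_one ((2:ℝ) ^ ((1:ℝ)/2)), ← Real.rpow_mul (by norm_num)]
    norm_num
  rw [hsplit, hinv] at hm
  -- hm : -((√2)⁻¹ * x) ≤ C/2 * r₀ - x
  have hinv2 : (Real.sqrt 2)⁻¹ = Real.sqrt 2 / 2 := by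
    field_simp
    rw [Real.sq_sqrt (by norm_num)]
  rw [hinv2] at hm
  -- so x * (2 - √2) ≤ C * r₀
  have hxle : x * (2 - Real.sqrt 2) ≤ C * r₀ := by linarith
  have hxx : x * x = (g r₀)⁻¹ := by
    rw [hx, ← Real.rpow_add hgr, ← Real.rpow_neg_one (g r₀)]
    norm_num
  have hpos2 : (0:ℝ) < 2 - Real.sqrt 2 := by linarith
  -- square the inequality
  have hsq : (x * (2 - Real.sqrt 2)) ^ 2 ≤ (C * r₀) ^ 2 := by
    apply pow_le_pow_left₀ (by positivity) hxle
  have hginv : (g r₀)⁻¹ * (2 - Real.sqrt 2) ^ 2 ≤ (C * r₀) ^ 2 := by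
    calc (g r₀)⁻¹ * (2 - Real.sqrt 2) ^ 2 = (x * (2 - Real.sqrt 2))^2 := by
          rw [mul_pow, sq x, hxx]
      _ ≤ (C * r₀) ^ 2 := hsq
  rw [div_pow, div_div, div_le_iff₀ (by positivity : (0:ℝ) < C ^ 2 * r₀ ^ 2)]
  have h3 : (g r₀)⁻¹ * g r₀ = 1 := inv_mul_cancel₀ hgr.ne'
  nlinarith [mul_le_mul_of_nonneg_right hginv hgr.le]
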